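/- Fix a cost vector $\omega$ with tie-breaking term order $\succ$. The reduced Gröbner basis $\mathcal{G}_{A,\succ}$ of $I_A$, viewed as the set of vectors $\{u - v : x^u - x^v \in \mathcal{G}_{A,\succ}, x^u \text{ the leading term}\} \subset \ker_{\mathbb{Z}}(A)$, is a test set for the family of integer programs $IP_{A,\omega}$: (a) for every non-optimal feasible solution $v$ of any program $IP_{A,\omega}(b)$ there exists $w$ in the set with $v - w$ feasible and $x^v \succ x^{v-w}$, and (b) for the optimal solution $u$ of $IP_{A,\omega}(b)$ and every $w$ in the set, $u - w$ is infeasible. -/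

import Mathlib

open MvPolynomial

noncomputable section

universe u

variable {α β : Type*} [Fintype α] [Fintype β]

/-- The Laurent monomial `t^a` in the group algebra `ℂ[ℤ^α]` (the Laurent polynomial ring). -/
def laurentMonomial (a : α → ℤ) : AddMonoidAlgebra ℂ (α →₀ ℤ) :=
  AddMonoidAlgebra.single (Finsupp.equivFunOnFinite.symm a) 1

/-- The monomial map `φ_A : x_j ↦ t^{a_j}` where `a_j` is the `j`-th column of `A`. -/
def phiMap (A : Matrix α β ℤ) : MvPolynomial β ℂ →ₐ[ℂ] AddMonoidAlgebra ℂ (α →₀ ℤ) :=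
  MvPolynomial.aeval fun j => laurentMonomial fun i => A i j

/-- The toric ideal `I_A`, the kernel of `φ_A`. -/
def toricIdeal (A : Matrix α β ℤ) : Ideal (MvPolynomial β ℂ) :=
  RingHom.ker (phiMap A).toRingHom

/-- The leading monomial (exponent vector) of `f` with respect to a monomial order. -/
def leadMon (m : MonomialOrder β) (f : MvPolynomial β ℂ) : β →₀ ℕ :=
  m.toSyn.symm (f.support.sup m.toSyn)

/-- The leading coefficient of `f` with respect to a monomial order. -/
def leadCoeff (m : MonomialOrder β) (f : MvPolynomial β ℂ) : ℂ := f.coeff (leadMon m f)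

/-- `G` is a Gröbner basis of `I`: a finite set of nonzero elements of `I` whose leading
monomials generate the initial ideal of `I` (i.e. the leading monomial of every nonzero
element of `I` is divisible by the leading monomial of some element of `G`). -/
def IsGroebnerBasis (m : MonomialOrder β) (I : Ideal (MvPolynomial β ℂ))
    (G : Set (MvPolynomial β ℂ)) : Prop :=
  G.Finite ∧ (∀ g ∈ G, g ∈ I ∧ g ≠ 0) ∧
    ∀ f ∈ I, f ≠ 0 → ∃ g ∈ G, leadMon m g ≤ leadMon m f

/-- `G` is the reduced Gröbner basis of `I`: a Gröbner basis, all of whose elements are monic,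
such that no monomial occurring in an element of `G` is divisible by the leading monomial of
another element of `G`. -/
def IsReducedGroebnerBasis (m : MonomialOrder β) (I : Ideal (MvPolynomial β ℂ))
    (G : Set (MvPolynomial β ℂ)) : Prop :=
  IsGroebnerBasis m I G ∧ (∀ g ∈ G, leadCoeff m g = 1) ∧
    ∀ g ∈ G, ∀ g' ∈ G, g' ≠ g → ∀ c ∈ g.support, ¬ leadMon m g' ≤ c

/-- The positive part `w⁺` of an integer vector, as an exponent vector. -/
def posPart (w : β → ℤ) : β →₀ ℕ := Finsupp.equivFunOnFinite.symm fun i => (w i).toNat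

/-- The negative part `w⁻` of an integer vector, as an exponent vector. -/
def negPart (w : β → ℤ) : β →₀ ℕ := Finsupp.equivFunOnFinite.symm fun i => (-(w i)).toNat

/-- The binomial `x^{w⁺} - x^{w⁻}` associated to an integer vector `w`. -/
def binom (w : β → ℤ) : MvPolynomial β ℂ := monomial (posPart w) 1 - monomial (negPart w) 1

/-- A circuit of `A`: a nonzero integer vector in `ker A` with coprime entries whose support
is minimal with respect to inclusion among supports of nonzero elements of `ker A`. -/
def IsCircuit (A : Matrix α β ℤ) (u : β → ℤ) : Prop :=
  u ≠ 0 ∧ A.mulVec u = 0 ∧ Finset.gcd Finset.univ u = 1 ∧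
    ∀ v : β → ℤ, v ≠ 0 → A.mulVec v = 0 →
      {i | v i ≠ 0} ⊆ {i | u i ≠ 0} → {i | v i ≠ 0} = {i | u i ≠ 0}

/-- A sign pattern `ρ ∈ {+1,-1}^n`. -/
def IsSignPattern (ρ : β → ℤ) : Prop := ∀ i, ρ i = 1 ∨ ρ i = -1

/-- Membership in `H_ρ = ℝ^n_ρ ∩ ker_ℤ(A)`: integer kernel elements conforming to the sign
pattern `ρ`. -/
def MemH (A : Matrix α β ℤ) (ρ : β → ℤ) (w : β → ℤ) : Prop :=
  A.mulVec w = 0 ∧ ∀ i, 0 ≤ ρ i * w i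

/-- `w` belongs to the Hilbert basis of the pointed cone `H_ρ`: it is a nonzero element of
`H_ρ` which cannot be written as the sum of two nonzero elements of `H_ρ` (equivalently, it
belongs to the unique minimal generating set of the monoid `H_ρ`). -/
def IsHilbertBasisElem (A : Matrix α β ℤ) (ρ : β → ℤ) (w : β → ℤ) : Prop :=
  MemH A ρ w ∧ w ≠ 0 ∧
    ¬ ∃ a b : β → ℤ, MemH A ρ a ∧ MemH A ρ b ∧ a ≠ 0 ∧ b ≠ 0 ∧ w = a + b

/-- `w` is a Graver basis vector of `A`: a member of the Hilbert basis of `H_ρ` for some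
sign pattern `ρ`. -/
def IsGraverVector (A : Matrix α β ℤ) (w : β → ℤ) : Prop :=
  ∃ ρ : β → ℤ, IsSignPattern ρ ∧ IsHilbertBasisElem A ρ w

/-- The Graver basis `Gr_A` of the toric ideal `I_A`, as a set of binomials. -/
def graverBasis (A : Matrix α β ℤ) : Set (MvPolynomial β ℂ) :=
  { p | ∃ w : β → ℤ, IsGraverVector A w ∧ p = binom w }

/-- The degree of the binomial `x^{w⁺} - x^{w⁻}`, namely `max(Σ w⁺, Σ w⁻)`. -/
def degZ (w : β → ℤ) : ℕ := max (∑ i, (w i).toNat) (∑ i, (-(w i)).toNat)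

/-- The columns of `A` generate a pointed cone. -/
def PointedCone' (A : Matrix α β ℤ) : Prop :=
  ∀ c : β → ℚ, (∀ i, 0 ≤ c i) → (A.map (Int.cast : ℤ → ℚ)).mulVec c = 0 → c = 0

/-- The row span of `A` contains the all-ones vector. -/
def RowSpanOne (A : Matrix α β ℤ) : Prop :=
  ∃ w : α → ℚ, (A.map (Int.cast : ℤ → ℚ)).vecMul w = fun _ => 1

/-- The universal Gröbner basis of an ideal: the union of its reduced Gröbner bases over
all term orders. -/
def universalGroebnerBasis {γ : Type u} [Fintype γ] (I : Ideal (MvPolynomial γ ℂ)) :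
    Set (MvPolynomial γ ℂ) :=
  { p | ∃ (m : MonomialOrder.{u, u} γ) (G : Set (MvPolynomial γ ℂ)),
      IsReducedGroebnerBasis m I G ∧ p ∈ G }

/-- The initial ideal of `I` with respect to a monomial order: the monomial ideal generated by
the leading monomials of the nonzero elements of `I`. -/
def initialIdeal (m : MonomialOrder β) (I : Ideal (MvPolynomial β ℂ)) :
    Ideal (MvPolynomial β ℂ) :=
  Ideal.span { p | ∃ f ∈ I, f ≠ 0 ∧ p = monomial (leadMon m f) (1 : ℂ) }

/-- `x` is a feasible solution of `IP_{A,ω}(b)`: a nonnegative integer vector with `Ax = b`. -/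
def Feasible {α β : Type*} [Fintype α] [Fintype β] (A : Matrix α β ℤ) (b : α → ℤ)
    (x : β → ℕ) : Prop :=
  A.mulVec (fun i => (x i : ℤ)) = b

/-- The cost `ω · x` of a solution. -/
def ipCost {β : Type*} [Fintype β] (ω : β → ℝ) (x : β → ℕ) : ℝ := ∑ i, ω i * x i

/-- `x` is an optimal solution of `IP_{A,ω}(b)`. -/
def IsOptimalSol {α β : Type*} [Fintype α] [Fintype β] (A : Matrix α β ℤ) (ω : β → ℝ)
    (b : α → ℤ) (x : β → ℕ) : Prop :=
  Feasible A b x ∧ ∀ y : β → ℕ, Feasible A b y → ipCost ω x ≤ ipCost ω y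

/-- Feasibility of an integer vector for `IP_{A,ω}(b)`: `Ay = b` and `y ≥ 0`. -/
def FeasibleZ {α β : Type*} [Fintype α] [Fintype β] (A : Matrix α β ℤ) (b : α → ℤ)
    (y : β → ℤ) : Prop :=
  A.mulVec y = b ∧ ∀ i, 0 ≤ y i

/-- The reduced Gröbner basis `𝒢_{A,≻}` viewed as a set of vectors
`{u - v : x^u - x^v ∈ 𝒢, x^u the leading term}` in `ker_ℤ(A)`. -/
def gbVectors {β : Type*} [Fintype β] (m : MonomialOrder β) (G : Set (MvPolynomial β ℂ)) :
    Set (β → ℤ) :=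
  { w | binom w ∈ G ∧ m.toSyn (negPart w) < m.toSyn (posPart w) }

def avec (A : Matrix α β ℤ) (u : β →₀ ℕ) : α →₀ ℤ :=
  Finsupp.equivFunOnFinite.symm (A.mulVec fun j => (u j : ℤ))

lemma phi_monomial (A : Matrix α β ℤ) (u : β →₀ ℕ) :
    phiMap A (monomial u (1 : ℂ)) = AddMonoidAlgebra.single (avec A u) 1 := by
  rw [MvPolynomial.monomial_eq]
  simp only [map_one, one_mul, Finsupp.prod, map_prod, map_pow, phiMap, MvPolynomial.aeval_X,
    laurentMonomial, AddMonoidAlgebra.single_pow, one_pow]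
  rw [AddMonoidAlgebra.prod_single]
  congr 1
  · ext i
    rw [Finset.sum_apply']
    simp only [Finsupp.smul_apply, Finsupp.coe_equivFunOnFinite_symm, smul_eq_mul,
      avec, Matrix.mulVec, dotProduct]
    rw [← Finset.sum_subset (Finset.subset_univ u.support)]
    · exact Finset.sum_congr rfl fun j _ => by ring
    · intro j _ hj
      simp only [Finsupp.notMem_support_iff] at hj
      simp [hj]
  · simp

lemma avec_add (A : Matrix α β ℤ) (x y : β →₀ ℕ) :
    avec A (x + y) = avec A x + avec A y := by
  ext i
  simp only [avec, Finsupp.coe_equivFunOnFinite_symm, Finsupp.add_apply,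
    Finsupp.coe_add, Pi.add_apply, Matrix.mulVec, dotProduct]
  rw [← Finset.sum_add_distrib]
  refine Finset.sum_congr rfl fun j _ => ?_
  push_cast
  ring

lemma binom_mem_toricIdeal (A : Matrix α β ℤ) {u v : β →₀ ℕ} (h : avec A u = avec A v) :
    monomial u (1 : ℂ) - monomial v 1 ∈ toricIdeal A := by
  have : (phiMap A) (monomial u (1 : ℂ) - monomial v 1) = 0 := by
    rw [map_sub, phi_monomial, phi_monomial, h, sub_self]
  exact this

lemma mulVec_parts (A : Matrix α β ℤ) {u c : β →₀ ℕ} (h : avec A u = avec A c) :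
    A.mulVec (fun i => (u i : ℤ) - c i) = 0 := by
  have h2 : A.mulVec (fun j => (u j : ℤ)) = A.mulVec (fun j => (c j : ℤ)) :=
    Finsupp.equivFunOnFinite.symm.injective h
  have : (fun i => (u i : ℤ) - c i) = (fun j => (u j : ℤ)) - (fun j => (c j : ℤ)) := rfl
  rw [this, Matrix.mulVec_sub, h2, sub_self]

lemma leadMon_mem_support (m : MonomialOrder β) {f : MvPolynomial β ℂ} (hf : f ≠ 0) :
    leadMon m f ∈ f.support := by
  obtain ⟨b, hb, hsup⟩ := Finset.exists_mem_eq_sup f.support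
      (MvPolynomial.support_nonempty.mpr hf) m.toSyn
  rw [leadMon, hsup, AddEquiv.symm_apply_apply]
  exact hb

lemma toSyn_le_leadMon (m : MonomialOrder β) {f : MvPolynomial β ℂ} {c : β →₀ ℕ}
    (hc : c ∈ f.support) : m.toSyn c ≤ m.toSyn (leadMon m f) := by
  rw [leadMon, AddEquiv.apply_symm_apply]
  exact Finset.le_sup hc

lemma coeff_sub_monomials (u v c : β →₀ ℕ) :
    MvPolynomial.coeff c (monomial u (1 : ℂ) - monomial v 1) =
      (if u = c then 1 else 0) - (if v = c then 1 else 0) := by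
  classical
  simp only [MvPolynomial.coeff_sub, MvPolynomial.coeff_monomial]
  split_ifs <;> rfl

lemma sub_monomials_ne_zero {u v : β →₀ ℕ} (h : u ≠ v) :
    monomial u (1 : ℂ) - monomial v 1 ≠ 0 := by
  intro e
  have := congrArg (MvPolynomial.coeff u) e
  rw [coeff_sub_monomials] at this
  simp [h.symm] at this

lemma mem_support_sub_monomials {u v x : β →₀ ℕ}
    (hx : x ∈ (monomial u (1 : ℂ) - monomial v 1).support) : x = u ∨ x = v := by
  rw [MvPolynomial.mem_support_iff, coeff_sub_monomials] at hx
  by_contra hc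
  push_neg at hc
  rw [if_neg fun e => hc.1 e.symm, if_neg fun e => hc.2 e.symm] at hx
  simp at hx

lemma left_mem_support_sub_monomials {u v : β →₀ ℕ} (h : u ≠ v) :
    u ∈ (monomial u (1 : ℂ) - monomial v 1).support := by
  rw [MvPolynomial.mem_support_iff, coeff_sub_monomials, if_pos rfl, if_neg (Ne.symm h)]
  simp

lemma leadMon_sub_monomials (m : MonomialOrder β) {u v : β →₀ ℕ}
    (h : m.toSyn v < m.toSyn u) :
    leadMon m (monomial u (1 : ℂ) - monomial v 1) = u := by
  have hne : u ≠ v := fun e => absurd (e ▸ h) (lt_irrefl _)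
  have hf0 : monomial u (1 : ℂ) - monomial v 1 ≠ 0 := sub_monomials_ne_zero hne
  rcases mem_support_sub_monomials (leadMon_mem_support m hf0) with h1 | h1
  · exact h1
  · exfalso
    have h2 := toSyn_le_leadMon m (left_mem_support_sub_monomials hne)
    rw [h1] at h2
    exact absurd h (not_lt.mpr h2)


lemma phi_apply_eq_sum (A : Matrix α β ℤ) (g : MvPolynomial β ℂ) :
    phiMap A g = ∑ c ∈ g.support, AddMonoidAlgebra.single (avec A c) (g.coeff c) := by
  conv_lhs => rw [g.as_sum]
  rw [map_sum]
  refine Finset.sum_congr rfl fun c _ => ?_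
  have h1 : monomial c (g.coeff c) = g.coeff c • monomial c (1 : ℂ) := by
    rw [MvPolynomial.smul_monomial, smul_eq_mul, mul_one]
  rw [h1, map_smul, phi_monomial, AddMonoidAlgebra.smul_single, smul_eq_mul, mul_one]

lemma fiber_sum (A : Matrix α β ℤ) {g : MvPolynomial β ℂ} (hg : g ∈ toricIdeal A)
    (k : α →₀ ℤ) (S : Finset (β →₀ ℕ))
    (hS : ∀ c, c ∈ S ↔ c ∈ g.support ∧ avec A c = k) :
    ∑ c ∈ S, g.coeff c = 0 := by
  have h0 : phiMap A g = 0 := hg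
  rw [phi_apply_eq_sum] at h0
  have h1 := congrArg (fun p : AddMonoidAlgebra ℂ (α →₀ ℤ) => p.coeff k) h0
  simp only [AddMonoidAlgebra.coeff_sum, AddMonoidAlgebra.coeff_single,
    AddMonoidAlgebra.coeff_zero, Finsupp.finset_sum_apply, Finsupp.single_apply, Finsupp.coe_zero,
    Pi.zero_apply] at h1
  calc ∑ c ∈ S, g.coeff c
      = ∑ c ∈ S, (if avec A c = k then g.coeff c else 0) :=
        Finset.sum_congr rfl fun c hc => by rw [if_pos ((hS c).1 hc).2]
    _ = ∑ c ∈ g.support, (if avec A c = k then g.coeff c else 0) :=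
        Finset.sum_subset (fun c hc => ((hS c).1 hc).1)
          (fun x _ hnx => by rw [if_neg fun hk => hnx ((hS x).2 ⟨‹x ∈ g.support›, hk⟩)])
    _ = 0 := (Finset.sum_congr rfl fun a _ => by split_ifs <;> rfl).trans h1

lemma reducedGB_mem_structure {A : Matrix α β ℤ} {m : MonomialOrder β}
    {G : Set (MvPolynomial β ℂ)} (hG : IsReducedGroebnerBasis m (toricIdeal A) G)
    {g : MvPolynomial β ℂ} (hg : g ∈ G) :
    ∃ u c : β →₀ ℕ, g = monomial u 1 - monomial c 1 ∧ avec A u = avec A c ∧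
      m.toSyn c < m.toSyn u ∧ u = leadMon m g ∧ ∀ i, u i = 0 ∨ c i = 0 := by
  classical
  obtain ⟨⟨hfin, hmem, hGB⟩, hmonic, hred⟩ := hG
  obtain ⟨hgI, hgne⟩ := hmem g hg
  set u := leadMon m g with hu_def
  have hus : u ∈ g.support := leadMon_mem_support m hgne
  have hcoeffu : g.coeff u = 1 := hmonic g hg
  have hexc : ∃ c ∈ g.support, c ≠ u ∧ avec A c = avec A u := by
    by_contra hc
    push_neg at hc
    have hfilter : g.support.filter (fun c => avec A c = avec A u) = {u} := by
      ext c
      simp only [Finset.mem_filter, Finset.mem_singleton]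
      constructor
      · rintro ⟨h1, h2⟩
        by_contra hne
        exact hc c h1 hne h2
      · rintro rfl
        exact ⟨hus, rfl⟩
    have := fiber_sum A hgI (avec A u)
      (g.support.filter (fun c => avec A c = avec A u))
      (fun c => Finset.mem_filter)
    rw [hfilter, Finset.sum_singleton, hcoeffu] at this
    exact one_ne_zero this
  obtain ⟨c, hcs, hcne, hcavec⟩ := hexc
  have hclt : m.toSyn c < m.toSyn u :=
    lt_of_le_of_ne (toSyn_le_leadMon m hcs) fun h => hcne (m.toSyn.injective h)
  have hcneu : u ≠ c := fun h => hcne h.symm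
  have hhI : monomial u (1 : ℂ) - monomial c 1 ∈ toricIdeal A :=
    binom_mem_toricIdeal A hcavec.symm
  have key : g = monomial u (1 : ℂ) - monomial c 1 := by
    by_contra hgh
    have hne0 : g - (monomial u (1 : ℂ) - monomial c 1) ≠ 0 := sub_ne_zero.mpr hgh
    have hI : g - (monomial u (1 : ℂ) - monomial c 1) ∈ toricIdeal A :=
      Ideal.sub_mem _ hgI hhI
    set u' := leadMon m (g - (monomial u (1 : ℂ) - monomial c 1)) with hu'
    have hu's : u' ∈ (g - (monomial u (1 : ℂ) - monomial c 1)).support :=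
      leadMon_mem_support m hne0
    have hcoeff' : ∀ x, (g - (monomial u (1 : ℂ) - monomial c 1)).coeff x =
        g.coeff x - ((if u = x then (1 : ℂ) else 0) - (if c = x then 1 else 0)) := by
      intro x
      rw [MvPolynomial.coeff_sub, coeff_sub_monomials]
      split_ifs <;> rfl
    have hne1 : (g - (monomial u (1 : ℂ) - monomial c 1)).coeff u' ≠ 0 :=
      MvPolynomial.mem_support_iff.mp hu's
    have hu'ne : u' ≠ u := by
      intro e
      rw [e, hcoeff' u, hcoeffu, if_pos rfl, if_neg (Ne.symm hcneu)] at hne1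
      simp at hne1
    have hu'mem : u' ∈ g.support := by
      rw [MvPolynomial.mem_support_iff]
      intro h0
      rw [hcoeff' u', h0] at hne1
      rcases eq_or_ne u u' with e1 | e1
      · rw [← e1] at h0; rw [h0] at hcoeffu; exact one_ne_zero hcoeffu.symm
      · rcases eq_or_ne c u' with e2 | e2
        · rw [← e2] at h0; exact (MvPolynomial.mem_support_iff.mp hcs) h0
        · rw [if_neg e1, if_neg e2] at hne1; simp at hne1
    obtain ⟨g'', hg''G, hle⟩ := hGB _ hI hne0
    rcases eq_or_ne g'' g with rfl | hgg
    · have h1 : m.toSyn u ≤ m.toSyn u' := m.toSyn_monotone (hu_def ▸ hle)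
      have h2 : m.toSyn u' ≤ m.toSyn u := toSyn_le_leadMon m hu'mem
      exact hu'ne (m.toSyn.injective (le_antisymm h2 h1))
    · exact hred g hg g'' hg''G hgg u' hu'mem hle
  refine ⟨u, c, key, hcavec.symm, hclt, rfl, ?_⟩
  intro i
  by_contra hi
  push_neg at hi
  obtain ⟨hi1, hi2⟩ := hi
  have hui : 1 ≤ u i := Nat.one_le_iff_ne_zero.mpr hi1
  have hci : 1 ≤ c i := Nat.one_le_iff_ne_zero.mpr hi2
  set e : β →₀ ℕ := Finsupp.single i 1 with he
  have heu : e ≤ u := by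
    rw [Finsupp.le_def]
    intro j
    rcases eq_or_ne j i with rfl | hj
    · simpa [he] using hui
    · simp [he, Finsupp.single_apply, Ne.symm hj]
  have hec : e ≤ c := by
    rw [Finsupp.le_def]
    intro j
    rcases eq_or_ne j i with rfl | hj
    · simpa [he] using hci
    · simp [he, Finsupp.single_apply, Ne.symm hj]
  have h1 : (u - e) + e = u := tsub_add_cancel_of_le heu
  have h2 : (c - e) + e = c := tsub_add_cancel_of_le hec
  have havec' : avec A (u - e) = avec A (c - e) := by
    have hsum : avec A (u - e) + avec A e = avec A (c - e) + avec A e := by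
      rw [← avec_add, ← avec_add, h1, h2]
      exact hcavec.symm
    exact add_right_cancel hsum
  have hne' : u - e ≠ c - e := by
    intro hh
    apply hcneu
    rw [← h1, ← h2, hh]
  have hfI : monomial (u - e) (1 : ℂ) - monomial (c - e) 1 ∈ toricIdeal A :=
    binom_mem_toricIdeal A havec'
  have hfne : monomial (u - e) (1 : ℂ) - monomial (c - e) 1 ≠ 0 :=
    sub_monomials_ne_zero hne'
  obtain ⟨g'', hg''G, hle⟩ := hGB _ hfI hfne
  have hlf := mem_support_sub_monomials (leadMon_mem_support m hfne)
  rcases eq_or_ne g'' g with rfl | hgg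
  · rcases hlf with hlf | hlf
    · rw [hlf] at hle
      have h4 : u ≤ u - e := by rw [hu_def]; exact hle
      have h5 : u i ≤ (u - e) i := (Finsupp.le_def.mp h4) i
      rw [Finsupp.tsub_apply] at h5
      have h6 : e i = 1 := by simp [he]
      omega
    · rw [hlf] at hle
      have h3 : u ≤ c := le_trans (hu_def ▸ hle) tsub_le_self
      have := m.toSyn_monotone h3
      exact absurd hclt (not_lt.mpr this)
  · rcases hlf with hlf | hlf
    · rw [hlf] at hle
      exact hred g hg g'' hg''G hgg u hus (le_trans hle tsub_le_self)
    · rw [hlf] at hle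
      exact hred g hg g'' hg''G hgg c hcs (le_trans hle tsub_le_self)


lemma posPart_of_parts {u c : β →₀ ℕ} (h : ∀ i, u i = 0 ∨ c i = 0) :
    _root_.posPart (fun i => (u i : ℤ) - c i) = u := by
  ext i
  simp only [_root_.posPart, Finsupp.coe_equivFunOnFinite_symm]
  have := h i
  omega

lemma negPart_of_parts {u c : β →₀ ℕ} (h : ∀ i, u i = 0 ∨ c i = 0) :
    _root_.negPart (fun i => (u i : ℤ) - c i) = c := by
  ext i
  simp only [_root_.negPart, Finsupp.coe_equivFunOnFinite_symm]
  have := h i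
  omega


/-- The reduced Gröbner basis `𝒢_{A,≻}`, viewed as a set of vectors in
`ker_ℤ(A)`, is a test set for the family of integer programs `IP_{A,ω}`:
(a) for every non-optimal feasible solution `v` of any program `IP_{A,ω}(b)` there is a `w`
in the set with `v - w` feasible and `x^v ≻ x^{v-w}`, and
(b) for the optimal solution `u` of `IP_{A,ω}(b)` and every `w` in the set, `u - w` is
infeasible. -/
theorem reducedGB_is_test_set (d n : ℕ) (A : Matrix (Fin d) (Fin n) ℤ)
    (hrank : A.rank = d) (hpointed : PointedCone' A) (hrow : RowSpanOne A)
    (ω : Fin n → ℝ) (m : MonomialOrder (Fin n))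
    (hcomp : ∀ u v : Fin n →₀ ℕ,
      (∑ i, ω i * (u i : ℝ)) < (∑ i, ω i * (v i : ℝ)) → m.toSyn u < m.toSyn v)
    (huniq : ∀ (b : Fin d → ℤ) (x y : Fin n → ℕ),
      IsOptimalSol A ω b x → IsOptimalSol A ω b y → x = y)
    (G : Set (MvPolynomial (Fin n) ℂ))
    (hG : IsReducedGroebnerBasis m (toricIdeal A) G) :
    -- (a)
    (∀ (b : Fin d → ℤ) (v : Fin n → ℕ), Feasible A b v → ¬ IsOptimalSol A ω b v →
      ∃ w ∈ gbVectors m G, FeasibleZ A b (fun i => (v i : ℤ) - w i) ∧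
        m.toSyn (Finsupp.equivFunOnFinite.symm fun i => ((v i : ℤ) - w i).toNat) <
          m.toSyn (Finsupp.equivFunOnFinite.symm fun i => v i)) ∧
    -- (b)
    (∀ (b : Fin d → ℤ) (x : Fin n → ℕ), IsOptimalSol A ω b x →
      ∀ w ∈ gbVectors m G, ¬ FeasibleZ A b (fun i => (x i : ℤ) - w i)) := by
  constructor
  · -- part (a)
    intro b v hfeas hnopt
    have hbetter : ∃ y : Fin n → ℕ, Feasible A b y ∧ ipCost ω y < ipCost ω v := by
      by_contra hy
      push_neg at hy
      exact hnopt ⟨hfeas, fun y hyf => hy y hyf⟩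
    obtain ⟨y, hyf, hylt⟩ := hbetter
    set vF := Finsupp.equivFunOnFinite.symm v with hvF
    set yF := Finsupp.equivFunOnFinite.symm y with hyF
    have hsyn : m.toSyn yF < m.toSyn vF := by
      apply hcomp
      simpa [hvF, hyF, ipCost] using hylt
    have hne : vF ≠ yF := fun e => lt_irrefl _ (e ▸ hsyn)
    have havec : avec A vF = avec A yF := by
      unfold avec
      congr 1
      simp only [hvF, hyF, Finsupp.coe_equivFunOnFinite_symm]
      exact hfeas.trans hyf.symm
    have hfI : monomial vF (1 : ℂ) - monomial yF 1 ∈ toricIdeal A :=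
      binom_mem_toricIdeal A havec
    have hfne : monomial vF (1 : ℂ) - monomial yF 1 ≠ 0 := sub_monomials_ne_zero hne
    obtain ⟨g, hgG, hgle⟩ := hG.1.2.2 _ hfI hfne
    rw [leadMon_sub_monomials m hsyn] at hgle
    obtain ⟨u, c, hgeq, havec2, hclt, hulead, hdisj⟩ := reducedGB_mem_structure hG hgG
    rw [← hulead] at hgle
    set w : Fin n → ℤ := fun i => (u i : ℤ) - c i with hw
    have hpos : _root_.posPart w = u := posPart_of_parts hdisj
    have hneg : _root_.negPart w = c := negPart_of_parts hdisj
    have hbin : binom w = g := by rw [binom, hpos, hneg, hgeq]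
    have hwG : w ∈ gbVectors m G := ⟨hbin ▸ hgG, by rw [hpos, hneg]; exact hclt⟩
    have hkerw : A.mulVec w = 0 := mulVec_parts A havec2
    have hule : ∀ i, u i ≤ v i := by
      intro i
      have := (Finsupp.le_def.mp hgle) i
      simpa [hvF] using this
    have hfz : FeasibleZ A b (fun i => (v i : ℤ) - w i) := by
      constructor
      · have he : (fun i => (v i : ℤ) - w i) = (fun i => ((v i : ℤ))) - w := rfl
        rw [he, Matrix.mulVec_sub, hkerw, hfeas, sub_zero]
      · intro i
        have h1 := hule i
        have h2 := hdisj i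
        simp only [hw]
        omega
    refine ⟨w, hwG, hfz, ?_⟩
    have hEq : (Finsupp.equivFunOnFinite.symm fun i => ((v i : ℤ) - w i).toNat)
        = vF - u + c := by
      ext i
      simp only [Finsupp.coe_equivFunOnFinite_symm, Finsupp.add_apply,
        Finsupp.tsub_apply, hvF, hw]
      have h1 := hule i
      omega
    rw [hEq]
    have hulevF : u ≤ vF := hgle
    have hvsub : vF - u + u = vF := tsub_add_cancel_of_le hulevF
    calc m.toSyn (vF - u + c) = m.toSyn (vF - u) + m.toSyn c := map_add _ _ _
      _ < m.toSyn (vF - u) + m.toSyn u := add_lt_add_right hclt _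
      _ = m.toSyn (vF - u + u) := (map_add _ _ _).symm
      _ = m.toSyn vF := by rw [hvsub]
  · -- part (b)
    intro b x hopt w hw hfz
    obtain ⟨hbinG, hsynw⟩ := hw
    obtain ⟨hAx, hxnn⟩ := hfz
    set y : Fin n → ℕ := fun i => ((x i : ℤ) - w i).toNat with hy
    have hyc : (fun i => (y i : ℤ)) = fun i => (x i : ℤ) - w i := by
      funext i
      simp only [hy, Int.toNat_of_nonneg (hxnn i)]
    have hyfeas : Feasible A b y := by
      unfold Feasible
      rw [hyc]
      exact hAx
    set xF := Finsupp.equivFunOnFinite.symm x with hxF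
    set yF := Finsupp.equivFunOnFinite.symm y with hyF
    have hple : _root_.posPart w ≤ xF := by
      rw [Finsupp.le_def]
      intro i
      have h0 : (0 : ℤ) ≤ (x i : ℤ) - w i := hxnn i
      simp only [_root_.posPart, hxF, Finsupp.coe_equivFunOnFinite_symm]
      omega
    have hEq : yF = xF - _root_.posPart w + _root_.negPart w := by
      ext i
      have h0 : (0 : ℤ) ≤ (x i : ℤ) - w i := hxnn i
      simp only [hyF, hy, hxF, _root_.posPart, _root_.negPart, Finsupp.add_apply, Finsupp.tsub_apply,
        Finsupp.coe_equivFunOnFinite_symm]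
      omega
    have hsyn : m.toSyn yF < m.toSyn xF := by
      rw [hEq]
      have hxsub : xF - _root_.posPart w + _root_.posPart w = xF := tsub_add_cancel_of_le hple
      calc m.toSyn (xF - _root_.posPart w + _root_.negPart w)
          = m.toSyn (xF - _root_.posPart w) + m.toSyn (_root_.negPart w) := map_add _ _ _
        _ < m.toSyn (xF - _root_.posPart w) + m.toSyn (_root_.posPart w) := add_lt_add_right hsynw _
        _ = m.toSyn (xF - _root_.posPart w + _root_.posPart w) := (map_add _ _ _).symm
        _ = m.toSyn xF := by rw [hxsub]
    have hcost : ipCost ω y ≤ ipCost ω x := by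
      by_contra hlt
      push_neg at hlt
      have h2 := hcomp xF yF (by simpa [hxF, hyF, ipCost] using hlt)
      exact lt_asymm hsyn h2
    have hyopt : IsOptimalSol A ω b y := ⟨hyfeas, fun z hz => le_trans hcost (hopt.2 z hz)⟩
    have hxy : x = y := huniq b x y hopt hyopt
    have : xF = yF := by rw [hxF, hyF, hxy]
    rw [this] at hsyn
    exact lt_irrefl _ hsyn
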